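/- arXiv:0709.1635 — 4 statements merged into one kernel-verified Lean document; each statement's English description precedes it below -/
import Mathlib

section
/- The rational function (R(x, y(1+t+⋯+t^r)) / (Δ(x)·Δ(y))) · det( 1/∏_{k=0}^{r}(x_i − t^k y_j) )_{i,j=1,…,n} is a polynomial in x₁,…,xₙ, y₁,…,yₙ, t, which is symmetric in the variables x₁,…,xₙ and symmetric in the variables y₁,…,yₙ. -/
noncomputable section

open scoped BigOperators

namespace Gaudin

variable {R : Type*} [CommRing R]

/-- The generating series `∏_{b∈B}(1-zb) / ∏_{a∈A}(1-za)` of the complete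
functions of the formal difference of alphabets `A - B` (the inverse is taken
via `PowerSeries.invOfUnit`, legitimate since the constant coefficient is `1`). -/
def genSeries (A B : Multiset R) : PowerSeries R :=
  (B.map (fun b => 1 - PowerSeries.C b * PowerSeries.X)).prod *
    PowerSeries.invOfUnit ((A.map (fun a => 1 - PowerSeries.C a * PowerSeries.X)).prod) 1

/-- The complete function `S_m(A-B)`: the coefficient of `z^m` in the generating
series, and `0` for `m < 0`. -/
def Scomp (A B : Multiset R) (m : ℤ) : R :=
  if m < 0 then 0 else PowerSeries.coeff m.toNat (genSeries A B)

/-- The Schur function of index `v ∈ ℕ^p` of the difference of alphabets `A - B`: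
`S_v(A-B) = det( S_{v_c + c - ρ}(A-B) )_{ρ,c = 1,…,p}`. -/
def SchurS {p : ℕ} (A B : Multiset R) (v : Fin p → ℕ) : R :=
  Matrix.det (Matrix.of fun ρ c : Fin p => Scomp A B ((v c : ℤ) + (c : ℤ) - (ρ : ℤ)))

/-- The Vandermonde `Δ(x) = ∏_{i<j} (x_j - x_i)`. -/
def vand {n : ℕ} (x : Fin n → R) : R :=
  ∏ i : Fin n, ∏ j ∈ Finset.Ioi i, (x j - x i)

variable {K : Type*} [Field K]

/-- The Gaudin function of level `r`:
`F^r_n(x,y) = (R(x, y(1+t+⋯+t^r)) / (Δ(x)Δ(y))) · det(1/∏_{k=0}^r (x_i - t^k y_j))`. -/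
def gaudinF (n r : ℕ) (t : K) (x y : Fin n → K) : K :=
  ((∏ i : Fin n, ∏ j : Fin n, ∏ k ∈ Finset.range (r + 1), (x i - t ^ k * y j)) /
      (vand x * vand y)) *
    Matrix.det (Matrix.of fun i j : Fin n =>
      (∏ k ∈ Finset.range (r + 1), (x i - t ^ k * y j))⁻¹)

/-- The alphabet `y(1+t+⋯+t^r) = {y, ty, …, t^r y}` attached to a single letter `y`. -/
def alph1t (r : ℕ) (t yi : K) : Multiset K :=
  (Finset.univ : Finset (Fin (r + 1))).val.map fun k => t ^ (k : ℕ) * yi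

/-- The alphabet (multiset) attached to a finite family of letters. -/
def alphOf {n : ℕ} (x : Fin n → K) : Multiset K :=
  (Finset.univ : Finset (Fin n)).val.map x

/-- The ordinary Schur polynomial `s_λ(x₁,…,xₙ)` in bialternant form. -/
def schurPol {n : ℕ} (lam : Fin n → ℕ) (x : Fin n → K) : K :=
  Matrix.det (Matrix.of fun i j : Fin n => x i ^ (lam j + (n - 1 - (j : ℕ)))) /
    Matrix.det (Matrix.of fun i j : Fin n => x i ^ (n - 1 - (j : ℕ)))

/-- Substitution of variables in a rational function, computed on the reduced
fraction (numerator/denominator), with the usual junk-value convention if the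
denominator specializes to zero. -/
def subst {σ : Type*} (g : σ → FractionRing (MvPolynomial σ ℚ))
    (f : FractionRing (MvPolynomial σ ℚ)) : FractionRing (MvPolynomial σ ℚ) :=
  MvPolynomial.aeval g (IsFractionRing.num (MvPolynomial σ ℚ) f) /
    MvPolynomial.aeval g ((IsFractionRing.den (MvPolynomial σ ℚ) f : MvPolynomial σ ℚ))

/-- Variable indices for the field `ℚ(t, x₁,…,xₙ, y₁,…,yₙ)`. -/
abbrev Vars (n : ℕ) := Unit ⊕ Fin n ⊕ Fin n

/-- The field `ℚ(t, x₁,…,xₙ, y₁,…,yₙ)`. -/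
abbrev Kn (n : ℕ) := FractionRing (MvPolynomial (Vars n) ℚ)

/-- The indeterminate `t`. -/
def tv (n : ℕ) : Kn n :=
  algebraMap (MvPolynomial (Vars n) ℚ) (Kn n) (MvPolynomial.X (Sum.inl ()))

/-- The indeterminates `x₁,…,xₙ`. -/
def xv {n : ℕ} (i : Fin n) : Kn n :=
  algebraMap (MvPolynomial (Vars n) ℚ) (Kn n) (MvPolynomial.X (Sum.inr (Sum.inl i)))

/-- The indeterminates `y₁,…,yₙ`. -/
def yv {n : ℕ} (j : Fin n) : Kn n :=
  algebraMap (MvPolynomial (Vars n) ℚ) (Kn n) (MvPolynomial.X (Sum.inr (Sum.inr j)))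

/-! ### Auxiliary machinery for the proof -/

open MvPolynomial Finset in
private lemma gaudin_primeX {σ : Type*} [DecidableEq σ] (u : σ) :
    Prime (MvPolynomial.X u : MvPolynomial σ ℚ) := by
  let e : MvPolynomial σ ℚ ≃ₐ[ℚ] Polynomial (MvPolynomial {b : σ // b ≠ u} ℚ) :=
    (MvPolynomial.renameEquiv ℚ (Equiv.optionSubtypeNe u).symm).trans
      (MvPolynomial.optionEquivLeft ℚ _)
  have he : e (MvPolynomial.X u) = Polynomial.X := by
    simp [e, Equiv.optionSubtypeNe_symm_self, MvPolynomial.optionEquivLeft_X_none]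
  rw [← MulEquiv.prime_iff e.toMulEquiv (p := (MvPolynomial.X u : MvPolynomial σ ℚ))]
  simpa [he] using Polynomial.prime_X

open MvPolynomial Finset in
private lemma gaudin_primeXsub {σ : Type*} [DecidableEq σ] {u v : σ} (huv : u ≠ v) :
    Prime (MvPolynomial.X u - MvPolynomial.X v : MvPolynomial σ ℚ) := by
  have hvu : v ≠ u := huv.symm
  let f : MvPolynomial σ ℚ →ₐ[ℚ] MvPolynomial σ ℚ :=
    aeval (fun s => if s = u then X u - X v else X s)
  let g : MvPolynomial σ ℚ →ₐ[ℚ] MvPolynomial σ ℚ :=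
    aeval (fun s => if s = u then X u + X v else X s)
  have hfg : f.comp g = AlgHom.id ℚ _ := by
    apply MvPolynomial.algHom_ext; intro s
    by_cases hs : s = u
    · subst hs; simp [f, g, hvu]
    · simp [f, g, hs]
  have hgf : g.comp f = AlgHom.id ℚ _ := by
    apply MvPolynomial.algHom_ext; intro s
    by_cases hs : s = u
    · subst hs; simp [f, g, hvu]
    · simp [f, g, hs]
  let e : MvPolynomial σ ℚ ≃ₐ[ℚ] MvPolynomial σ ℚ := AlgEquiv.ofAlgHom f g hfg hgf
  have := MulEquiv.prime_iff e.toMulEquiv (p := (MvPolynomial.X u : MvPolynomial σ ℚ))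
  have he : e (MvPolynomial.X u) = X u - X v := by
    simp [e, f, AlgEquiv.ofAlgHom]
  rw [← he]
  exact (this).mpr (gaudin_primeX u)

open MvPolynomial Finset in
private lemma gaudin_dvd_of_subst_eq_zero {σ : Type*} [DecidableEq σ] (u v : σ)
    (p : MvPolynomial σ ℚ)
    (h : aeval (fun s => if s = u then (X v : MvPolynomial σ ℚ) else X s) p = 0) :
    (X u - X v : MvPolynomial σ ℚ) ∣ p := by
  let ψ : MvPolynomial σ ℚ →ₐ[ℚ] Polynomial (MvPolynomial σ ℚ) :=
    aeval (fun s => if s = u then Polynomial.X else Polynomial.C (X s))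
  have key : ∀ w : σ, Polynomial.eval (X w : MvPolynomial σ ℚ) (ψ p)
      = aeval (fun s => if s = u then (X w : MvPolynomial σ ℚ) else X s) p := by
    intro w
    have : ((Polynomial.evalRingHom (X w : MvPolynomial σ ℚ)).comp ψ.toRingHom)
        = (aeval (fun s => if s = u then (X w : MvPolynomial σ ℚ) else X s)).toRingHom := by
      apply MvPolynomial.ringHom_ext
      · intro a; simp [ψ, algebraMap_eq]
      · intro s; by_cases hs : s = u <;> simp [ψ, hs]
    exact congrFun (congrArg (fun (F : MvPolynomial σ ℚ →+* MvPolynomial σ ℚ) =>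
      (F : MvPolynomial σ ℚ → MvPolynomial σ ℚ)) this) p
  have hu : Polynomial.eval (X u : MvPolynomial σ ℚ) (ψ p) = p := by
    rw [key u]
    have : (fun s => if s = u then (X u : MvPolynomial σ ℚ) else X s) = X := by
      funext s; by_cases hs : s = u <;> simp [hs]
    rw [this]
    simp [aeval_X_left]
  have hv : Polynomial.eval (X v : MvPolynomial σ ℚ) (ψ p) = 0 := by rw [key v]; exact h
  have := Polynomial.sub_dvd_eval_sub (X u : MvPolynomial σ ℚ) (X v) (ψ p)
  rwa [hu, hv, sub_zero] at this

open MvPolynomial Finset in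
private lemma gaudin_dvd_of_swap_neg {σ : Type*} [DecidableEq σ] {u v : σ} (huv : u ≠ v)
    (p : MvPolynomial σ ℚ)
    (h : rename (Equiv.swap u v) p = -p) : (X u - X v : MvPolynomial σ ℚ) ∣ p := by
  set φ : MvPolynomial σ ℚ →ₐ[ℚ] MvPolynomial σ ℚ :=
    aeval (fun s => if s = u then (X v : MvPolynomial σ ℚ) else X s) with hφ
  have hcomp : φ.comp (rename (Equiv.swap u v)) = φ := by
    apply MvPolynomial.algHom_ext; intro s
    by_cases hs : s = u
    · subst hs; simp [φ, Equiv.swap_apply_left, huv.symm]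
    · by_cases hs' : s = v
      · subst hs'; simp [φ, Equiv.swap_apply_right, huv.symm]
      · simp [φ, Equiv.swap_apply_of_ne_of_ne hs hs', hs]
  have h0 : φ p = 0 := by
    have h1 : φ (rename (Equiv.swap u v) p) = φ p := by
      exact congrFun (congrArg (fun (F : MvPolynomial σ ℚ →ₐ[ℚ] MvPolynomial σ ℚ) =>
        (F : MvPolynomial σ ℚ → MvPolynomial σ ℚ)) hcomp) p
    rw [h, map_neg] at h1
    have h2 : (2 : ℚ) • φ p = 0 := by
      rw [two_smul]; nth_rewrite 1 [← h1]; exact neg_add_cancel _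
    simpa using h2
  exact gaudin_dvd_of_subst_eq_zero u v p h0

open MvPolynomial Finset in
private lemma gaudin_not_dvd_XsubX {σ : Type*} [DecidableEq σ] {u v u' v' : σ} (huv : u ≠ v)
    (h1 : (u, v) ≠ (u', v')) (h2 : (u, v) ≠ (v', u')) :
    ¬ ((X u' - X v' : MvPolynomial σ ℚ) ∣ (X u - X v)) := by
  have key : ∀ w : σ → ℚ, MvPolynomial.eval w (X u' - X v' : MvPolynomial σ ℚ) = 0 →
      MvPolynomial.eval w (X u - X v : MvPolynomial σ ℚ) ≠ 0 →
      ¬ ((X u' - X v' : MvPolynomial σ ℚ) ∣ (X u - X v)) := by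
    rintro w hq hp ⟨c, hc⟩
    apply hp
    rw [hc, map_mul, hq, zero_mul]
  by_cases hu : u = u' ∨ u = v'
  · have hv1 : v ≠ u' := by
      rintro rfl
      rcases hu with rfl | rfl
      · exact huv rfl
      · exact h2 rfl
    have hv2 : v ≠ v' := by
      rintro rfl
      rcases hu with rfl | rfl
      · exact h1 rfl
      · exact huv rfl
    refine key (fun s => if s = v then 1 else 0) ?_ ?_
    · simp [hv1.symm, hv2.symm]
    · simp [huv, huv.symm]
  · push_neg at hu
    refine key (fun s => if s = u then 1 else 0) ?_ ?_
    · simp [Ne.symm hu.1, Ne.symm hu.2]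
    · simp [huv.symm]

open MvPolynomial Finset in
private lemma gaudin_prod_pairs_dvd {σ : Type*} [DecidableEq σ] {ι : Type*} [DecidableEq ι]
    (s : Finset ι) (a b : ι → σ) (p : MvPolynomial σ ℚ)
    (hne : ∀ i ∈ s, a i ≠ b i)
    (hdist : ∀ i ∈ s, ∀ j ∈ s, i ≠ j → (a i, b i) ≠ (a j, b j) ∧ (a i, b i) ≠ (b j, a j))
    (hdvd : ∀ i ∈ s, (X (a i) - X (b i) : MvPolynomial σ ℚ) ∣ p) :
    (∏ i ∈ s, (X (a i) - X (b i) : MvPolynomial σ ℚ)) ∣ p := by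
  induction s using Finset.induction_on generalizing p with
  | empty => simpa using one_dvd p
  | @insert j s' hj ih =>
    have hqprime : Prime (X (a j) - X (b j) : MvPolynomial σ ℚ) :=
      gaudin_primeXsub (hne j (Finset.mem_insert_self j s'))
    obtain ⟨m, hm⟩ := hdvd j (Finset.mem_insert_self j s')
    have hrest : ∀ i ∈ s', (X (a i) - X (b i) : MvPolynomial σ ℚ) ∣ m := by
      intro i hi
      have hii : i ≠ j := by rintro rfl; exact hj hi
      have hip : (X (a i) - X (b i) : MvPolynomial σ ℚ) ∣ (X (a j) - X (b j)) * m := by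
        rw [← hm]; exact hdvd i (Finset.mem_insert_of_mem hi)
      have hiprime : Prime (X (a i) - X (b i) : MvPolynomial σ ℚ) :=
        gaudin_primeXsub (hne i (Finset.mem_insert_of_mem hi))
      rcases hiprime.2.2 _ _ hip with h | h
      · exfalso
        obtain ⟨hd1, hd2⟩ := hdist j (Finset.mem_insert_self j s') i
          (Finset.mem_insert_of_mem hi) hii.symm
        exact gaudin_not_dvd_XsubX (hne j (Finset.mem_insert_self j s')) hd1 hd2 h
      · exact h
    have hprod := ih m (fun i hi => hne i (Finset.mem_insert_of_mem hi))
      (fun i hi k hk hik => hdist i (Finset.mem_insert_of_mem hi) k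
        (Finset.mem_insert_of_mem hk) hik)
      hrest
    rw [Finset.prod_insert hj, hm]
    exact mul_dvd_mul_left _ hprod

open MvPolynomial Finset in
private lemma gaudin_vand_dvd {σ : Type*} [DecidableEq σ] {n : ℕ} (v : Fin n → σ)
    (hv : Function.Injective v) (p : MvPolynomial σ ℚ)
    (hdvd : ∀ i j : Fin n, i < j → (X (v j) - X (v i) : MvPolynomial σ ℚ) ∣ p) :
    (∏ i : Fin n, ∏ j ∈ Finset.Ioi i, (X (v j) - X (v i) : MvPolynomial σ ℚ)) ∣ p := by
  have key := gaudin_prod_pairs_dvd (Finset.univ.sigma fun i : Fin n => Finset.Ioi i)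
    (fun e => v e.2) (fun e => v e.1) p ?_ ?_ ?_
  · rwa [Finset.prod_sigma] at key
  · rintro ⟨i, j⟩ hij
    rw [Finset.mem_sigma, Finset.mem_Ioi] at hij
    exact fun h => absurd (hv h) (ne_of_gt hij.2)
  · rintro ⟨i, j⟩ hij ⟨i', j'⟩ hij' hne
    rw [Finset.mem_sigma, Finset.mem_Ioi] at hij hij'
    constructor
    · intro h
      rw [Prod.mk.injEq] at h
      have e1 : i = i' := hv h.2
      have e2 : j = j' := hv h.1
      subst e1; subst e2
      exact hne rfl
    · intro h
      rw [Prod.mk.injEq] at h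
      have h1 : j = i' := hv h.1
      have h2 : i = j' := hv h.2
      have := hij.2.trans (h1 ▸ hij'.2)
      exact absurd (h2 ▸ this) (lt_irrefl _)
  · rintro ⟨i, j⟩ hij
    rw [Finset.mem_sigma, Finset.mem_Ioi] at hij
    exact hdvd i j hij.2

open MvPolynomial Finset in
private lemma gaudin_vand2_dvd {σ : Type*} [DecidableEq σ] {n : ℕ} (vx vy : Fin n → σ)
    (hx : Function.Injective vx) (hy : Function.Injective vy)
    (hxy : ∀ i j, vx i ≠ vy j) (p : MvPolynomial σ ℚ)
    (hdx : ∀ i j : Fin n, i < j → (X (vx j) - X (vx i) : MvPolynomial σ ℚ) ∣ p)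
    (hdy : ∀ i j : Fin n, i < j → (X (vy j) - X (vy i) : MvPolynomial σ ℚ) ∣ p) :
    ((∏ i : Fin n, ∏ j ∈ Finset.Ioi i, (X (vx j) - X (vx i) : MvPolynomial σ ℚ)) *
      (∏ i : Fin n, ∏ j ∈ Finset.Ioi i, (X (vy j) - X (vy i) : MvPolynomial σ ℚ))) ∣ p := by
  obtain ⟨m, hm⟩ := gaudin_vand_dvd vy hy p hdy
  have hxm : ∀ i j : Fin n, i < j → (X (vx j) - X (vx i) : MvPolynomial σ ℚ) ∣ m := by
    intro i j hij
    have hprime : Prime (X (vx j) - X (vx i) : MvPolynomial σ ℚ) :=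
      gaudin_primeXsub (fun h => absurd (hx h) (ne_of_gt hij))
    have hd : (X (vx j) - X (vx i) : MvPolynomial σ ℚ) ∣
        (∏ a : Fin n, ∏ b ∈ Finset.Ioi a, (X (vy b) - X (vy a) : MvPolynomial σ ℚ)) * m := by
      rw [← hm]; exact hdx i j hij
    rcases hprime.2.2 _ _ hd with h | h
    · exfalso
      obtain ⟨a, _, h2⟩ := hprime.exists_mem_finset_dvd h
      obtain ⟨b, hb, h3⟩ := hprime.exists_mem_finset_dvd h2
      rw [Finset.mem_Ioi] at hb
      refine gaudin_not_dvd_XsubX (u := vy b) (v := vy a) (u' := vx j) (v' := vx i)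
        (fun h => absurd (hy h) (ne_of_gt hb)) ?_ ?_ h3
      · simp [Prod.ext_iff]; intro h; exact absurd h.symm (hxy j b)
      · simp [Prod.ext_iff]; intro h; exact absurd h.symm (hxy i b)
    · exact h
  obtain ⟨q, hq⟩ := gaudin_vand_dvd vx hx m hxm
  exact ⟨q, by rw [hm, hq]; ring⟩

open MvPolynomial Finset

/-- The variable `t`. -/
abbrev tvar (n : ℕ) : Vars n := Sum.inl ()
/-- The variable `xᵢ`. -/
abbrev xvar {n : ℕ} (i : Fin n) : Vars n := Sum.inr (Sum.inl i)
/-- The variable `yⱼ`. -/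
abbrev yvar {n : ℕ} (j : Fin n) : Vars n := Sum.inr (Sum.inr j)

/-- The polynomial `∏_{k=0}^{r}(xᵢ - tᵏ yⱼ)`. -/
noncomputable def pEnt (n r : ℕ) (i j : Fin n) : MvPolynomial (Vars n) ℚ :=
  ∏ k ∈ Finset.range (r+1), (X (xvar i) - X (tvar n) ^ k * X (yvar j))

/-- The matrix whose determinant is `R(x, y(1+t+⋯+t^r)) · det(1/∏(xᵢ-tᵏyⱼ))`. -/
noncomputable def Mmat (n r : ℕ) : Matrix (Fin n) (Fin n) (MvPolynomial (Vars n) ℚ) :=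
  Matrix.of fun i j => ∏ j' ∈ Finset.univ.erase j, pEnt n r i j'

lemma xvar_inj {n : ℕ} : Function.Injective (xvar (n := n)) := by
  intro i j h; simpa using h

lemma yvar_inj {n : ℕ} : Function.Injective (yvar (n := n)) := by
  intro i j h; simpa using h

lemma rename_swap_x (n r : ℕ) (a b : Fin n) (hab : a ≠ b) :
    rename (Equiv.swap (xvar a) (xvar b)) (Mmat n r).det = - (Mmat n r).det := by
  have hd : rename (Equiv.swap (xvar a) (xvar b)) (Mmat n r).det
      = ((Mmat n r).map (rename (Equiv.swap (xvar a) (xvar b))).toRingHom).det :=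
    RingHom.map_det _ _
  rw [hd]
  have hM : (Mmat n r).map (rename (Equiv.swap (xvar a) (xvar b))).toRingHom
      = (Mmat n r).submatrix (Equiv.swap a b) id := by
    refine Matrix.ext fun i j => ?_
    simp only [Matrix.map_apply, Matrix.submatrix_apply, Mmat, Matrix.of_apply, id_eq,
      AlgHom.toRingHom_eq_coe, RingHom.coe_coe]
    refine (map_prod (rename (⇑(Equiv.swap (xvar a) (xvar b)))) (fun j' => pEnt n r i j')
      (Finset.univ.erase j)).trans ?_
    refine Finset.prod_congr rfl fun j' _ => ?_
    simp only [pEnt, _root_.map_prod, map_sub, map_mul, map_pow, rename_X]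
    refine Finset.prod_congr rfl fun k _ => ?_
    have e1 : Equiv.swap (xvar a) (xvar b) (xvar i) = xvar (Equiv.swap a b i) :=
      Function.Injective.swap_apply xvar_inj a b i
    have e2 : Equiv.swap (xvar a) (xvar b) (tvar n) = tvar n :=
      Equiv.swap_apply_of_ne_of_ne (by simp) (by simp)
    have e3 : Equiv.swap (xvar a) (xvar b) (yvar j') = yvar j' :=
      Equiv.swap_apply_of_ne_of_ne (by simp) (by simp)
    rw [e1, e2, e3]
  rw [hM, Matrix.det_permute, Equiv.Perm.sign_swap hab]
  simp

lemma erase_reindex {n : ℕ} {M : Type*} [CommMonoid M] (σ : Equiv.Perm (Fin n)) (j : Fin n)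
    (h : Fin n → M) :
    ∏ j' ∈ Finset.univ.erase j, h (σ j') = ∏ j' ∈ Finset.univ.erase (σ j), h j' := by
  have hpm := Finset.prod_map (Finset.univ.erase j) σ.toEmbedding h
  simp only [Equiv.coe_toEmbedding] at hpm
  rw [← hpm]
  congr 1
  ext x
  simp only [Finset.mem_map_equiv, Finset.mem_erase, Finset.mem_univ, and_true]
  exact not_congr (Equiv.symm_apply_eq σ)

lemma rename_swap_y (n r : ℕ) (a b : Fin n) (hab : a ≠ b) :
    rename (Equiv.swap (yvar a) (yvar b)) (Mmat n r).det = - (Mmat n r).det := by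
  have hd : rename (Equiv.swap (yvar a) (yvar b)) (Mmat n r).det
      = ((Mmat n r).map (rename (Equiv.swap (yvar a) (yvar b))).toRingHom).det :=
    RingHom.map_det _ _
  rw [hd]
  have hM : (Mmat n r).map (rename (Equiv.swap (yvar a) (yvar b))).toRingHom
      = (Mmat n r).submatrix id (Equiv.swap a b) := by
    refine Matrix.ext fun i j => ?_
    simp only [Matrix.map_apply, Matrix.submatrix_apply, Mmat, Matrix.of_apply, id_eq,
      AlgHom.toRingHom_eq_coe, RingHom.coe_coe]
    refine (map_prod (rename (⇑(Equiv.swap (yvar a) (yvar b)))) (fun j' => pEnt n r i j')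
      (Finset.univ.erase j)).trans ?_
    rw [← erase_reindex (Equiv.swap a b) j (pEnt n r i)]
    refine Finset.prod_congr rfl fun j' _ => ?_
    simp only [pEnt, _root_.map_prod, map_sub, map_mul, map_pow, rename_X]
    refine Finset.prod_congr rfl fun k _ => ?_
    have e1 : Equiv.swap (yvar a) (yvar b) (yvar j') = yvar (Equiv.swap a b j') :=
      Function.Injective.swap_apply yvar_inj a b j'
    have e2 : Equiv.swap (yvar a) (yvar b) (tvar n) = tvar n :=
      Equiv.swap_apply_of_ne_of_ne (by simp) (by simp)
    have e3 : Equiv.swap (yvar a) (yvar b) (xvar i) = xvar i :=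
      Equiv.swap_apply_of_ne_of_ne (by simp) (by simp)
    rw [e1, e2, e3]
  rw [hM, Matrix.det_permute', Equiv.Perm.sign_swap hab]
  simp

section FieldLemmas

variable {K : Type*} [Field K]

lemma vand_perm {n : ℕ} (x : Fin n → K) (w : Equiv.Perm (Fin n)) :
    vand (fun i => x (w i)) = ((Equiv.Perm.sign w : ℤ) : K) * vand x := by
  have hv : ∀ z : Fin n → K, vand z = (Matrix.vandermonde z).det :=
    fun z => (Matrix.det_vandermonde z).symm
  have hsub : Matrix.vandermonde (fun i => x (w i)) = (Matrix.vandermonde x).submatrix w id := by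
    ext i j; simp [Matrix.vandermonde]
  rw [hv, hsub, Matrix.det_permute, ← hv]

lemma gaudinF_perm_x (n r : ℕ) (t : K) (x y : Fin n → K) (w : Equiv.Perm (Fin n)) :
    gaudinF n r t (fun i => x (w i)) y = gaudinF n r t x y := by
  unfold gaudinF
  have hnum : (∏ i : Fin n, ∏ j : Fin n, ∏ k ∈ range (r+1), (x (w i) - t^k * y j))
      = ∏ i : Fin n, ∏ j : Fin n, ∏ k ∈ range (r+1), (x i - t^k * y j) :=
    Equiv.prod_comp w (fun i => ∏ j : Fin n, ∏ k ∈ range (r+1), (x i - t^k * y j))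
  have hsub : (Matrix.of fun i j : Fin n => (∏ k ∈ range (r+1), (x (w i) - t^k*y j))⁻¹)
      = (Matrix.of fun i j : Fin n =>
          (∏ k ∈ range (r+1), (x i - t^k*y j))⁻¹).submatrix w id := by
    ext i j; simp
  have hdet : Matrix.det (Matrix.of fun i j : Fin n =>
        (∏ k ∈ range (r+1), (x (w i) - t^k*y j))⁻¹)
      = ((Equiv.Perm.sign w : ℤ) : K) *
        Matrix.det (Matrix.of fun i j : Fin n =>
          (∏ k ∈ range (r+1), (x i - t^k*y j))⁻¹) := by
    rw [hsub, Matrix.det_permute]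
  rw [hnum, vand_perm x w, hdet]
  rcases Int.units_eq_one_or (Equiv.Perm.sign w) with hs | hs <;> rw [hs] <;>
    simp [div_neg, neg_mul, neg_neg]

lemma gaudinF_perm_y (n r : ℕ) (t : K) (x y : Fin n → K) (w : Equiv.Perm (Fin n)) :
    gaudinF n r t x (fun j => y (w j)) = gaudinF n r t x y := by
  unfold gaudinF
  have hnum : (∏ i : Fin n, ∏ j : Fin n, ∏ k ∈ range (r+1), (x i - t^k * y (w j)))
      = ∏ i : Fin n, ∏ j : Fin n, ∏ k ∈ range (r+1), (x i - t^k * y j) :=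
    Finset.prod_congr rfl fun i _ =>
      Equiv.prod_comp w (fun j => ∏ k ∈ range (r+1), (x i - t^k * y j))
  have hsub : (Matrix.of fun i j : Fin n => (∏ k ∈ range (r+1), (x i - t^k*y (w j)))⁻¹)
      = (Matrix.of fun i j : Fin n =>
          (∏ k ∈ range (r+1), (x i - t^k*y j))⁻¹).submatrix id w := by
    ext i j; simp
  have hdet : Matrix.det (Matrix.of fun i j : Fin n =>
        (∏ k ∈ range (r+1), (x i - t^k*y (w j)))⁻¹)
      = ((Equiv.Perm.sign w : ℤ) : K) *
        Matrix.det (Matrix.of fun i j : Fin n =>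
          (∏ k ∈ range (r+1), (x i - t^k*y j))⁻¹) := by
    rw [hsub, Matrix.det_permute']
  rw [hnum, vand_perm y w, hdet]
  rcases Int.units_eq_one_or (Equiv.Perm.sign w) with hs | hs <;> rw [hs] <;>
    simp [div_neg, neg_mul, neg_neg]

lemma gaudinF_eq (n r : ℕ) (t : K) (x y : Fin n → K)
    (hp : ∀ i j : Fin n, (∏ k ∈ range (r+1), (x i - t^k * y j)) ≠ 0) :
    gaudinF n r t x y =
      Matrix.det (Matrix.of fun i j : Fin n =>
        ∏ j' ∈ Finset.univ.erase j, ∏ k ∈ range (r+1), (x i - t^k * y j')) /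
      (vand x * vand y) := by
  unfold gaudinF
  have hent : (Matrix.of fun i j : Fin n =>
        ∏ j' ∈ Finset.univ.erase j, ∏ k ∈ range (r+1), (x i - t^k * y j'))
      = Matrix.of fun i j : Fin n =>
        (∏ j' : Fin n, ∏ k ∈ range (r+1), (x i - t^k * y j')) *
          ((∏ k ∈ range (r+1), (x i - t^k * y j))⁻¹) := by
    refine Matrix.ext fun i j => ?_
    have hthis := Finset.prod_erase_mul Finset.univ
      (fun j' => ∏ k ∈ range (r+1), (x i - t^k * y j')) (Finset.mem_univ j)
    simp only [Matrix.of_apply]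
    rw [← hthis, mul_assoc, mul_inv_cancel₀ (hp i j), mul_one]
  rw [hent, show (Matrix.of fun i j : Fin n => (∏ j' : Fin n, ∏ k ∈ range (r+1), (x i - t^k * y j')) *
      (∏ k ∈ range (r+1), (x i - t^k * y j))⁻¹).det = (∏ i : Fin n, ∏ j' : Fin n, ∏ k ∈ range (r+1),
      (x i - t^k * y j')) * (Matrix.of fun i j : Fin n => (∏ k ∈ range (r+1), (x i - t^k * y j))⁻¹).det
      from Matrix.det_mul_column _ _, div_mul_eq_mul_div]

end FieldLemmas

lemma factor_poly_ne (n : ℕ) (i j : Fin n) (k : ℕ) :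
    (X (xvar i) - X (tvar n) ^ k * X (yvar j) : MvPolynomial (Vars n) ℚ) ≠ 0 := by
  intro h
  have h2 := congrArg (MvPolynomial.eval
    (fun s : Vars n => if s = xvar i then (1 : ℚ) else 0)) h
  simp at h2

lemma prodk_ne (n r : ℕ) (i j : Fin n) :
    (∏ k ∈ range (r+1), (xv i - tv n ^ k * yv j) : Kn n) ≠ 0 := by
  refine Finset.prod_ne_zero_iff.mpr fun k _ => ?_
  have he : (xv i - tv n ^ k * yv j : Kn n)
      = algebraMap (MvPolynomial (Vars n) ℚ) (Kn n)
        (X (xvar i) - X (tvar n) ^ k * X (yvar j)) := by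
    simp only [map_sub, map_mul, map_pow]; rfl
  rw [he]
  intro h0
  exact factor_poly_ne n i j k ((map_eq_zero_iff _ (IsFractionRing.injective _ _)).mp h0)

lemma vand_poly_ne {n : ℕ} (v : Fin n → Vars n) (hv : Function.Injective v) :
    (∏ i : Fin n, ∏ j ∈ Finset.Ioi i,
      (X (v j) - X (v i) : MvPolynomial (Vars n) ℚ)) ≠ 0 :=
  Finset.prod_ne_zero_iff.mpr fun i _ => Finset.prod_ne_zero_iff.mpr fun j hj =>
    (gaudin_primeXsub (fun h => (Finset.mem_Ioi.mp hj).ne' (hv h))).ne_zero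


/-- The rational function
`(R(x, y(1+t+⋯+t^r)) / (Δ(x)·Δ(y))) · det(1/∏_{k=0}^r (x_i - t^k y_j))`
is a polynomial in `x₁,…,xₙ, y₁,…,yₙ, t`, symmetric in `x₁,…,xₙ` and
symmetric in `y₁,…,yₙ`. -/
theorem gaudin_is_symmetric_polynomial (n r : ℕ) (hn : 1 ≤ n) (hr : 1 ≤ r) :
    (∃ P : MvPolynomial (Vars n) ℚ,
        algebraMap (MvPolynomial (Vars n) ℚ) (Kn n) P = gaudinF n r (tv n) xv yv) ∧
    (∀ w : Equiv.Perm (Fin n),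
        gaudinF n r (tv n) (fun i => xv (w i)) yv = gaudinF n r (tv n) xv yv) ∧
    (∀ w : Equiv.Perm (Fin n),
        gaudinF n r (tv n) xv (fun j => yv (w j)) = gaudinF n r (tv n) xv yv) := by
  classical
  refine ⟨?_, fun w => gaudinF_perm_x n r (tv n) xv yv w,
    fun w => gaudinF_perm_y n r (tv n) xv yv w⟩
  have hdx : ∀ i j : Fin n, i < j →
      (X (xvar j) - X (xvar i) : MvPolynomial (Vars n) ℚ) ∣ (Mmat n r).det :=
    fun i j hij => gaudin_dvd_of_swap_neg (fun h => hij.ne' (xvar_inj h)) _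
      (rename_swap_x n r j i hij.ne')
  have hdy : ∀ i j : Fin n, i < j →
      (X (yvar j) - X (yvar i) : MvPolynomial (Vars n) ℚ) ∣ (Mmat n r).det :=
    fun i j hij => gaudin_dvd_of_swap_neg (fun h => hij.ne' (yvar_inj h)) _
      (rename_swap_y n r j i hij.ne')
  obtain ⟨Q, hQ⟩ := gaudin_vand2_dvd xvar yvar xvar_inj yvar_inj (by simp)
    (Mmat n r).det hdx hdy
  refine ⟨Q, ?_⟩
  rw [gaudinF_eq n r (tv n) xv yv (prodk_ne n r)]
  have h2 : (algebraMap (MvPolynomial (Vars n) ℚ) (Kn n)) (Mmat n r).det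
      = Matrix.det (Matrix.of fun i j : Fin n =>
          ∏ j' ∈ Finset.univ.erase j, ∏ k ∈ range (r+1), (xv i - tv n ^ k * yv j')) := by
    rw [RingHom.map_det (algebraMap (MvPolynomial (Vars n) ℚ) (Kn n)) (Mmat n r)]
    congr 1
    refine Matrix.ext fun i j => ?_
    simp only [RingHom.mapMatrix_apply, Matrix.map_apply, Mmat, Matrix.of_apply, pEnt,
      _root_.map_prod, map_sub, map_mul, map_pow, xv, tv, yv]
  have h3 : vand (xv : Fin n → Kn n)
      = algebraMap (MvPolynomial (Vars n) ℚ) (Kn n) (∏ i : Fin n, ∏ j ∈ Finset.Ioi i,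
          (X (xvar j) - X (xvar i) : MvPolynomial (Vars n) ℚ)) := by
    simp only [vand, _root_.map_prod, map_sub]; rfl
  have h4 : vand (yv : Fin n → Kn n)
      = algebraMap (MvPolynomial (Vars n) ℚ) (Kn n) (∏ i : Fin n, ∏ j ∈ Finset.Ioi i,
          (X (yvar j) - X (yvar i) : MvPolynomial (Vars n) ℚ)) := by
    simp only [vand, _root_.map_prod, map_sub]; rfl
  have hVx : algebraMap (MvPolynomial (Vars n) ℚ) (Kn n) (∏ i : Fin n, ∏ j ∈ Finset.Ioi i,
      (X (xvar j) - X (xvar i) : MvPolynomial (Vars n) ℚ)) ≠ 0 := fun h =>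
    vand_poly_ne xvar xvar_inj ((map_eq_zero_iff _ (IsFractionRing.injective _ _)).mp h)
  have hVy : algebraMap (MvPolynomial (Vars n) ℚ) (Kn n) (∏ i : Fin n, ∏ j ∈ Finset.Ioi i,
      (X (yvar j) - X (yvar i) : MvPolynomial (Vars n) ℚ)) ≠ 0 := fun h =>
    vand_poly_ne yvar yvar_inj ((map_eq_zero_iff _ (IsFractionRing.injective _ _)).mp h)
  rw [← h2, hQ, map_mul, map_mul, h3, h4]
  exact (mul_div_cancel_left₀ _ (mul_ne_zero hVx hVy)).symm

end Gaudin
end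
end

section
/- Let (j₁,k₁),…,(jₙ,kₙ) be pairwise distinct pairs with 1 ≤ j_m ≤ n and 0 ≤ k_m ≤ r, and suppose there exist p ≠ q with j_p = j_q. Then the Gaudin function vanishes under the corresponding specialization of the x-variables: F^r_n( (t^{k₁} y_{j₁}, …, t^{kₙ} y_{jₙ}), y ) = 0. -/
noncomputable section

open scoped BigOperators

namespace Gaudin

variable {R : Type*} [CommRing R]

variable {K : Type*} [Field K]

/-! ### Auxiliary lemmas for the proof -/

section Aux

lemma aux_map_vand {R S : Type*} [CommRing R] [CommRing S] {F : Type*} [FunLike F R S]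
    [RingHomClass F R S] (f : F) {n : ℕ} (x : Fin n → R) :
    f (vand x) = vand (fun i => f (x i)) := by
  simp [vand, map_prod, map_sub]

lemma aux_vand_ne_zero {K : Type*} [Field K] {n : ℕ} {x : Fin n → K}
    (hx : Function.Injective x) : vand x ≠ 0 := by
  rw [vand]
  refine Finset.prod_ne_zero_iff.2 fun i _ => Finset.prod_ne_zero_iff.2 fun j hj => ?_
  have hne : i ≠ j := (Finset.mem_Ioi.1 hj).ne
  exact sub_ne_zero.2 fun h => hne (hx h).symm

/-- The key determinant identity in an arbitrary field. -/
lemma aux_gaudin_mul_vand {K : Type*} [Field K] (n r : ℕ) (t : K) (x y : Fin n → K)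
    (hxy : ∀ i j : Fin n, ∏ k ∈ Finset.range (r + 1), (x i - t ^ k * y j) ≠ 0)
    (hv : vand x * vand y ≠ 0) :
    gaudinF n r t x y * (vand x * vand y) =
      ∑ σ : Equiv.Perm (Fin n), (Equiv.Perm.sign σ : ℤ) •
        ∏ i : Fin n, ∏ i' ∈ Finset.univ.erase (σ i),
          ∏ k ∈ Finset.range (r + 1), (x i' - t ^ k * y i) := by
  set D : Fin n → Fin n → K := fun a b => ∏ k ∈ Finset.range (r + 1), (x a - t ^ k * y b)
    with hD
  have key : gaudinF n r t x y * (vand x * vand y) =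
      (∏ i : Fin n, ∏ j : Fin n, D i j) *
        Matrix.det (Matrix.of fun i j : Fin n => (D i j)⁻¹) := by
    rw [gaudinF, mul_right_comm, div_mul_cancel₀ _ hv]
  rw [key, Matrix.det_apply, Finset.mul_sum]
  refine Finset.sum_congr rfl fun σ _ => ?_
  rw [Finset.prod_comm (s := Finset.univ) (t := Finset.univ)]
  rw [mul_comm, smul_mul_assoc]
  congr 1
  rw [← Finset.prod_mul_distrib]
  refine Finset.prod_congr rfl fun i _ => ?_
  have h1 : ∏ a : Fin n, D a i = D (σ i) i * ∏ i' ∈ Finset.univ.erase (σ i), D i' i :=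
    (Finset.mul_prod_erase Finset.univ (fun a => D a i) (Finset.mem_univ (σ i))).symm
  rw [Matrix.of_apply, h1, ← mul_assoc, inv_mul_cancel₀ (hxy (σ i) i), one_mul]

lemma aux_inj_Kn {n : ℕ} : Function.Injective
    (algebraMap (MvPolynomial (Vars n) ℚ) (Kn n)) :=
  IsFractionRing.injective _ _

lemma aux_tpow_yv_inj {n : ℕ} {a a' : ℕ} {b b' : Fin n}
    (h : tv n ^ a * yv b = tv n ^ a' * yv b') : a = a' ∧ b = b' := by
  have hpoly : (MvPolynomial.X (Sum.inl ()) : MvPolynomial (Vars n) ℚ) ^ a *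
      MvPolynomial.X (Sum.inr (Sum.inr b)) =
      MvPolynomial.X (Sum.inl ()) ^ a' * MvPolynomial.X (Sum.inr (Sum.inr b')) := by
    apply aux_inj_Kn
    simpa [tv, yv, map_mul, map_pow] using h
  rw [show (MvPolynomial.X (Sum.inr (Sum.inr b)) : MvPolynomial (Vars n) ℚ) =
        MvPolynomial.X (Sum.inr (Sum.inr b)) ^ 1 by ring,
      show (MvPolynomial.X (Sum.inr (Sum.inr b')) : MvPolynomial (Vars n) ℚ) =
        MvPolynomial.X (Sum.inr (Sum.inr b')) ^ 1 by ring,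
      MvPolynomial.X_pow_eq_monomial, MvPolynomial.X_pow_eq_monomial,
      MvPolynomial.X_pow_eq_monomial, MvPolynomial.X_pow_eq_monomial,
      MvPolynomial.monomial_mul, MvPolynomial.monomial_mul,
      MvPolynomial.monomial_left_inj (by norm_num : (1 : ℚ) * 1 ≠ 0)] at hpoly
  have ha := DFunLike.congr_fun hpoly (Sum.inl ())
  have hb := DFunLike.congr_fun hpoly (Sum.inr (Sum.inr b))
  simp [Finsupp.single_apply] at ha hb
  refine ⟨ha, ?_⟩
  by_contra hbb
  simp [Ne.symm hbb] at hb

lemma aux_yv_inj {n : ℕ} : Function.Injective (yv (n := n)) := by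
  intro a b h
  have := MvPolynomial.X_injective (aux_inj_Kn h)
  simpa using this

lemma aux_xv_sub_ne {n : ℕ} (r : ℕ) (i j : Fin n) (k : ℕ) :
    xv i - tv n ^ k * yv j ≠ 0 := by
  have hpoly : (MvPolynomial.X (Sum.inr (Sum.inl i)) -
      MvPolynomial.X (Sum.inl ()) ^ k * MvPolynomial.X (Sum.inr (Sum.inr j)) :
      MvPolynomial (Vars n) ℚ) ≠ 0 := by
    intro h
    have := congrArg
      (MvPolynomial.eval (fun v : Vars n => if v = Sum.inr (Sum.inl i) then (1 : ℚ) else 0)) h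
    simp at this
  intro h
  apply hpoly
  apply aux_inj_Kn
  simpa [xv, tv, yv, map_sub, map_mul, map_pow] using h

lemma aux_xv_inj {n : ℕ} : Function.Injective (xv (n := n)) := by
  intro a b h
  have := MvPolynomial.X_injective (aux_inj_Kn h)
  simpa using this

end Aux

/-- let `(j₁,k₁),…,(jₙ,kₙ)` be pairwise distinct pairs with
`j_m ∈ {1,…,n}`, `k_m ∈ {0,…,r}`, two of which share the same first component.
Then the Gaudin function (i.e. any polynomial `P` representing it) vanishes
under the specialization `x_m ↦ t^{k_m} y_{j_m}`. -/
theorem gaudin_vanishes_on_repeated_y (n r : ℕ) (hn : 1 ≤ n) (hr : 1 ≤ r)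
    (P : MvPolynomial (Vars n) ℚ)
    (hP : algebraMap (MvPolynomial (Vars n) ℚ) (Kn n) P = gaudinF n r (tv n) xv yv)
    (jk : Fin n → Fin n × Fin (r + 1)) (hjk : Function.Injective jk)
    (p q : Fin n) (hpq : p ≠ q) (hsame : (jk p).1 = (jk q).1) :
    MvPolynomial.aeval (fun v : Vars n => match v with
      | Sum.inl () => tv n
      | Sum.inr (Sum.inl m) => tv n ^ ((jk m).2 : ℕ) * yv (jk m).1
      | Sum.inr (Sum.inr j) => yv j) P = 0 := by
  classical
  set g : Vars n → Kn n := (fun v : Vars n => match v with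
      | Sum.inl () => tv n
      | Sum.inr (Sum.inl m) => tv n ^ ((jk m).2 : ℕ) * yv (jk m).1
      | Sum.inr (Sum.inr j) => yv j) with hg
  set phi := MvPolynomial.aeval (R := ℚ) g with hphi
  -- polynomial versions of the Vandermondes and of the expanded determinant
  set Vxp : MvPolynomial (Vars n) ℚ :=
    vand (fun i => MvPolynomial.X (Sum.inr (Sum.inl i))) with hVxp
  set Vyp : MvPolynomial (Vars n) ℚ :=
    vand (fun j => MvPolynomial.X (Sum.inr (Sum.inr j))) with hVyp
  set Gp : MvPolynomial (Vars n) ℚ :=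
    ∑ σ : Equiv.Perm (Fin n), (Equiv.Perm.sign σ : ℤ) •
      ∏ i : Fin n, ∏ i' ∈ Finset.univ.erase (σ i),
        ∏ k ∈ Finset.range (r + 1),
          (MvPolynomial.X (Sum.inr (Sum.inl i')) -
            MvPolynomial.X (Sum.inl ()) ^ k * MvPolynomial.X (Sum.inr (Sum.inr i)))
    with hGp
  set ι := algebraMap (MvPolynomial (Vars n) ℚ) (Kn n) with hι
  -- the polynomial identity P * Vxp * Vyp = Gp
  have hvx : vand (xv (n := n)) ≠ 0 := aux_vand_ne_zero aux_xv_inj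
  have hvy : vand (yv (n := n)) ≠ 0 := aux_vand_ne_zero aux_yv_inj
  have hxy : ∀ i j : Fin n,
      ∏ k ∈ Finset.range (r + 1), (xv i - tv n ^ k * yv j) ≠ 0 := fun i j =>
    Finset.prod_ne_zero_iff.2 fun k _ => aux_xv_sub_ne r i j k
  have hιVx : ι Vxp = vand (xv (n := n)) := by
    rw [hVxp, aux_map_vand]; rfl
  have hιVy : ι Vyp = vand (yv (n := n)) := by
    rw [hVyp, aux_map_vand]; rfl
  have hιGp : ι Gp =
      ∑ σ : Equiv.Perm (Fin n), (Equiv.Perm.sign σ : ℤ) •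
        ∏ i : Fin n, ∏ i' ∈ Finset.univ.erase (σ i),
          ∏ k ∈ Finset.range (r + 1), (xv i' - tv n ^ k * yv i) := by
    rw [hGp, map_sum]
    refine Finset.sum_congr rfl fun σ _ => ?_
    rw [map_zsmul, map_prod]
    congr 1
    refine Finset.prod_congr rfl fun i _ => ?_
    rw [map_prod]
    refine Finset.prod_congr rfl fun i' _ => ?_
    rw [map_prod]
    refine Finset.prod_congr rfl fun k _ => ?_
    rw [map_sub, map_mul, map_pow]
    rfl
  have hkey : P * (Vxp * Vyp) = Gp := by
    apply aux_inj_Kn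
    rw [map_mul, map_mul, ← hι, hP, hιVx, hιVy, hιGp]
    exact aux_gaudin_mul_vand n r (tv n) xv yv hxy (mul_ne_zero hvx hvy)
  -- apply the specialization
  have hspec := congrArg phi hkey
  rw [map_mul, map_mul] at hspec
  -- the specialized images of the variables
  have hgx : ∀ m : Fin n, phi (MvPolynomial.X (Sum.inr (Sum.inl m))) =
      tv n ^ ((jk m).2 : ℕ) * yv (jk m).1 := fun m => by
    rw [hphi, MvPolynomial.aeval_X]
  have hgy : ∀ j : Fin n, phi (MvPolynomial.X (Sum.inr (Sum.inr j))) = yv j := fun j => by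
    rw [hphi, MvPolynomial.aeval_X]
  have hgt : phi (MvPolynomial.X (Sum.inl ())) = tv n := by
    rw [hphi, MvPolynomial.aeval_X]
  -- the specialized Gp vanishes
  have hGp0 : phi Gp = 0 := by
    rw [hGp, map_sum]
    refine Finset.sum_eq_zero fun σ _ => ?_
    rw [map_zsmul, map_prod]
    obtain ⟨m, hm⟩ : ∃ m : Fin n, σ ((jk m).1) ≠ m := by
      by_contra hall
      push_neg at hall
      exact hpq (by rw [← hall p, hsame, hall q])
    rw [Finset.prod_eq_zero (Finset.mem_univ ((jk m).1))]
    · simp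
    · rw [map_prod]
      rw [Finset.prod_eq_zero
        (Finset.mem_erase.2 ⟨fun h => hm h.symm, Finset.mem_univ m⟩)]
      rw [map_prod]
      rw [Finset.prod_eq_zero (Finset.mem_range.2 (jk m).2.isLt)]
      rw [map_sub, map_mul, map_pow, hgx, hgy, hgt, sub_self]
  -- the specialized Vandermondes are nonzero
  have hVx0 : phi Vxp ≠ 0 := by
    rw [hVxp, aux_map_vand]
    apply aux_vand_ne_zero
    intro a b h
    simp only [hgx] at h
    obtain ⟨h1, h2⟩ := aux_tpow_yv_inj h
    exact hjk (Prod.ext h2 (Fin.val_injective h1))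
  have hVy0 : phi Vyp ≠ 0 := by
    rw [hVyp, aux_map_vand]
    apply aux_vand_ne_zero
    intro a b h
    simp only [hgy] at h
    exact aux_yv_inj h
  -- conclude
  have := hspec
  rw [hGp0, mul_eq_zero, mul_eq_zero] at this
  rcases this with h | h
  · exact h
  · rcases h with h | h
    · exact absurd h hVx0
    · exact absurd h hVy0

end Gaudin
end
end

section
/- For 1 ≤ i ≤ n−2, the operators T_i := ⋃_i − 1 satisfy the braid relation T_i T_{i+1} T_i = T_{i+1} T_i T_{i+1} as operators on rational functions of x₁,…,xₙ; moreover T_i T_j = T_j T_i whenever |i − j| ≥ 2. -/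
noncomputable section

open scoped BigOperators

namespace Gaudin

variable {R : Type*} [CommRing R]

variable {K : Type*} [Field K]

/-- The field `ℚ(t, x₁,…,xₙ)`. -/
abbrev K2 (n : ℕ) := FractionRing (MvPolynomial (Unit ⊕ Fin n) ℚ)

/-- The indeterminate `t`. -/
def t2 (n : ℕ) : K2 n :=
  algebraMap (MvPolynomial (Unit ⊕ Fin n) ℚ) (K2 n) (MvPolynomial.X (Sum.inl ()))

/-- The indeterminates `x₁,…,xₙ`. -/
def x2 {n : ℕ} (i : Fin n) : K2 n :=
  algebraMap (MvPolynomial (Unit ⊕ Fin n) ℚ) (K2 n) (MvPolynomial.X (Sum.inr i))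

/-- Action of a permutation `w ∈ S_n` on rational functions of `t, x₁,…,xₙ`,
permuting the `x`-variables. -/
def permAct2 {n : ℕ} (w : Equiv.Perm (Fin n)) : K2 n → K2 n :=
  subst (fun v => match v with
    | Sum.inl () => t2 n
    | Sum.inr i => x2 (w i))

/-- The operator `⋃_{(i,j)}` (for `j = i+1` this is `⋃_i`):
`f ⋃_i = (f·(t x_i - x_{i+1}) - f^{s_i}·(t x_{i+1} - x_i))/(x_i - x_{i+1})`. -/
def Uop {n : ℕ} (i j : Fin n) (f : K2 n) : K2 n :=
  (f * (t2 n * x2 i - x2 j) - permAct2 (Equiv.swap i j) f * (t2 n * x2 j - x2 i)) /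
    (x2 i - x2 j)

/-- The Hecke-algebra generator `T_i := ⋃_i - 1`. -/
def Top {n : ℕ} (i j : Fin n) (f : K2 n) : K2 n := Uop i j f - f


section HeckeField

variable {K : Type*} [Field K]

lemma hecke_step (s : K →+* K) (t x y g : K) (h : x - y ≠ 0) :
    (g * (t*x - y) - s g * (t*y - x)) / (x - y) - g
      = (t*x - x)/(x-y) * g + ((x - t*y)/(x-y)) * s g := by
  field_simp
  ring

lemma hecke_braid (s1 s2 : K →+* K) (t a b c : K)
    (h1t : s1 t = t) (h2t : s2 t = t)
    (h1a : s1 a = b) (h1b : s1 b = a) (h1c : s1 c = c)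
    (h2a : s2 a = a) (h2b : s2 b = c) (h2c : s2 c = b)
    (hab : a ≠ b) (hbc : b ≠ c) (hac : a ≠ c)
    (h11 : ∀ f, s1 (s1 f) = f) (h22 : ∀ f, s2 (s2 f) = f)
    (hbr : ∀ f, s1 (s2 (s1 f)) = s2 (s1 (s2 f)))
    (f : K) :
    (fun g => (g * (t*a - b) - s1 g * (t*b - a)) / (a - b) - g)
      ((fun g => (g * (t*b - c) - s2 g * (t*c - b)) / (b - c) - g)
        ((fun g => (g * (t*a - b) - s1 g * (t*b - a)) / (a - b) - g) f)) =
    (fun g => (g * (t*b - c) - s2 g * (t*c - b)) / (b - c) - g)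
      ((fun g => (g * (t*a - b) - s1 g * (t*b - a)) / (a - b) - g)
        ((fun g => (g * (t*b - c) - s2 g * (t*c - b)) / (b - c) - g) f)) := by
  have hab' : a - b ≠ 0 := sub_ne_zero.mpr hab
  have hbc' : b - c ≠ 0 := sub_ne_zero.mpr hbc
  have hac' : a - c ≠ 0 := sub_ne_zero.mpr hac
  have hba : b - a = -(a - b) := by ring
  have hcb : c - b = -(b - c) := by ring
  have hca : c - a = -(a - c) := by ring
  simp only [hecke_step s1 t a b _ hab', hecke_step s2 t b c _ hbc']
  simp only [map_add, map_mul, map_sub, map_div₀, map_neg,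
    h1t, h2t, h1a, h1b, h1c, h2a, h2b, h2c, h11, h22, hbr,
    hba, hcb, hca, div_neg, neg_div]
  have h0 : (t*a-a)/(a-b) * ((t*b-b)/(b-c)) * ((t*a-a)/(a-b))
        + (a-t*b)/(a-b) * ((t*a-a)/(a-c)) * (-((b-t*a)/(a-b)))
      = (t*b-b)/(b-c) * ((t*a-a)/(a-b)) * ((t*b-b)/(b-c))
        + (b-t*c)/(b-c) * ((t*a-a)/(a-c)) * (-((c-t*b)/(b-c))) := by
    field_simp
    ring
  have h1 : (t*a-a)/(a-b) * ((t*b-b)/(b-c)) * ((a-t*b)/(a-b))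
        + (a-t*b)/(a-b) * ((t*a-a)/(a-c)) * (-((t*b-b)/(a-b)))
      = (t*b-b)/(b-c) * ((a-t*b)/(a-b)) * ((t*a-a)/(a-c)) := by
    field_simp
    ring
  have h2 : (t*a-a)/(a-b) * ((b-t*c)/(b-c)) * ((t*a-a)/(a-c))
      = (t*b-b)/(b-c) * ((t*a-a)/(a-b)) * ((b-t*c)/(b-c))
        + (b-t*c)/(b-c) * ((t*a-a)/(a-c)) * (-((t*c-c)/(b-c))) := by
    field_simp
    ring
  linear_combination h0 * f + h1 * s1 f + h2 * s2 f

lemma hecke_comm (s1 s2 : K →+* K) (t a b c d : K)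
    (h1t : s1 t = t) (h2t : s2 t = t)
    (h1a : s1 a = b) (h1b : s1 b = a) (h1c : s1 c = c) (h1d : s1 d = d)
    (h2a : s2 a = a) (h2b : s2 b = b) (h2c : s2 c = d) (h2d : s2 d = c)
    (hab : a - b ≠ 0) (hcd : c - d ≠ 0)
    (hcm : ∀ f, s1 (s2 f) = s2 (s1 f)) (f : K) :
    (fun g => (g * (t*a - b) - s1 g * (t*b - a)) / (a - b) - g)
      ((fun g => (g * (t*c - d) - s2 g * (t*d - c)) / (c - d) - g) f) =
    (fun g => (g * (t*c - d) - s2 g * (t*d - c)) / (c - d) - g)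
      ((fun g => (g * (t*a - b) - s1 g * (t*b - a)) / (a - b) - g) f) := by
  simp only [hecke_step s1 t a b _ hab, hecke_step s2 t c d _ hcd]
  simp only [map_add, map_mul, map_sub, map_div₀,
    h1t, h2t, h1a, h1b, h1c, h1d, h2a, h2b, h2c, h2d, hcm]
  ring

end HeckeField

/-- The field homomorphism of `ℚ(t,x)` induced by permuting the `x`-variables. -/
def permHom {n : ℕ} (w : Equiv.Perm (Fin n)) : K2 n →+* K2 n :=
  (IsFractionRing.ringEquivOfRingEquiv
    (MvPolynomial.renameEquiv ℚ (Equiv.sumCongr (Equiv.refl Unit) w)).toRingEquiv).toRingHom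

lemma permHom_algebraMap {n : ℕ} (w : Equiv.Perm (Fin n))
    (p : MvPolynomial (Unit ⊕ Fin n) ℚ) :
    permHom w (algebraMap _ (K2 n) p) =
      algebraMap _ (K2 n) (MvPolynomial.rename (Equiv.sumCongr (Equiv.refl Unit) w) p) := by
  simp [permHom, IsFractionRing.ringEquivOfRingEquiv_algebraMap]

lemma aeval_perm_eq {n : ℕ} (w : Equiv.Perm (Fin n)) (p : MvPolynomial (Unit ⊕ Fin n) ℚ) :
    MvPolynomial.aeval (fun v => match v with
      | Sum.inl () => t2 n
      | Sum.inr i => x2 (w i)) p =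
      algebraMap _ (K2 n) (MvPolynomial.rename (Equiv.sumCongr (Equiv.refl Unit) w) p) := by
  have := congrFun (congrArg DFunLike.coe (MvPolynomial.ringHom_ext
    (f := (MvPolynomial.aeval (R := ℚ) (fun v => match v with
      | Sum.inl () => t2 n
      | Sum.inr i => x2 (w i))).toRingHom)
    (g := (algebraMap (MvPolynomial (Unit ⊕ Fin n) ℚ) (K2 n)).comp
      ((MvPolynomial.rename (Equiv.sumCongr (Equiv.refl Unit) w)).toRingHom))
    (fun r => by
      simp [MvPolynomial.algHom_C]
      rw [← MvPolynomial.algebraMap_eq, ← IsScalarTower.algebraMap_apply]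
      exact (eq_ratCast (algebraMap ℚ (K2 n)) r).symm)
    (fun v => by cases v with
      | inl u => cases u; simp [t2]
      | inr i => simp [x2]))) p
  simpa using this

lemma permAct2_eq {n : ℕ} (w : Equiv.Perm (Fin n)) (f : K2 n) :
    permAct2 w f = permHom w f := by
  unfold permAct2 subst
  rw [aeval_perm_eq, aeval_perm_eq, ← permHom_algebraMap, ← permHom_algebraMap,
    ← map_div₀, IsFractionRing.mk'_num_den']

lemma permHom_t {n : ℕ} (w : Equiv.Perm (Fin n)) : permHom w (t2 n) = t2 n := by
  rw [t2, permHom_algebraMap]; simp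

lemma permHom_x {n : ℕ} (w : Equiv.Perm (Fin n)) (i : Fin n) :
    permHom w (x2 i) = x2 (w i) := by
  rw [x2, permHom_algebraMap]; simp [x2]

lemma permHom_comp {n : ℕ} (w v : Equiv.Perm (Fin n)) (f : K2 n) :
    permHom w (permHom v f) = permHom (w * v) f := by
  conv_lhs => rw [← IsFractionRing.mk'_num_den' (MvPolynomial (Unit ⊕ Fin n) ℚ) f]
  conv_rhs => rw [← IsFractionRing.mk'_num_den' (MvPolynomial (Unit ⊕ Fin n) ℚ) f]
  simp only [map_div₀, permHom_algebraMap, MvPolynomial.rename_rename]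
  have h : ⇑((Equiv.refl Unit).sumCongr w) ∘ ⇑((Equiv.refl Unit).sumCongr v)
      = ⇑((Equiv.refl Unit).sumCongr (w * v)) := by
    funext s; cases s <;> simp
  rw [h]

lemma permHom_one {n : ℕ} (f : K2 n) : permHom (1 : Equiv.Perm (Fin n)) f = f := by
  conv_lhs => rw [← IsFractionRing.mk'_num_den' (MvPolynomial (Unit ⊕ Fin n) ℚ) f]
  simp only [map_div₀, permHom_algebraMap]
  have h : ⇑((Equiv.refl Unit).sumCongr (1 : Equiv.Perm (Fin n))) = id := by
    funext s; cases s <;> simp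
  rw [h]
  simp [IsFractionRing.mk'_num_den']

lemma x2_ne {n : ℕ} {i j : Fin n} (h : i ≠ j) : x2 i ≠ x2 j := by
  intro hx
  exact h (Sum.inr_injective (MvPolynomial.X_injective
    (IsFractionRing.injective (MvPolynomial (Unit ⊕ Fin n) ℚ) (K2 n) hx)))

lemma Top_eq {n : ℕ} (u v : Fin n) (f : K2 n) :
    Top u v f = (f * (t2 n * x2 u - x2 v) - (permHom (Equiv.swap u v)) f *
      (t2 n * x2 v - x2 u)) / (x2 u - x2 v) - f := by
  rw [Top, Uop, permAct2_eq]

/-- the operators `T_i = ⋃_i - 1` satisfy the braid relations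
`T_i T_{i+1} T_i = T_{i+1} T_i T_{i+1}` (for `1 ≤ i ≤ n-2`), and
`T_i T_j = T_j T_i` when `|i - j| ≥ 2`. -/
theorem Top_braid_relations (n : ℕ) :
    (∀ (i : ℕ) (hi : i + 2 < n), ∀ f : K2 n,
      Top ⟨i, by omega⟩ ⟨i + 1, by omega⟩
          (Top ⟨i + 1, by omega⟩ ⟨i + 2, hi⟩
            (Top ⟨i, by omega⟩ ⟨i + 1, by omega⟩ f)) =
        Top ⟨i + 1, by omega⟩ ⟨i + 2, hi⟩
          (Top ⟨i, by omega⟩ ⟨i + 1, by omega⟩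
            (Top ⟨i + 1, by omega⟩ ⟨i + 2, hi⟩ f))) ∧
    (∀ (i j : ℕ) (hi : i + 1 < n) (hj : j + 1 < n),
      (i + 2 ≤ j ∨ j + 2 ≤ i) → ∀ f : K2 n,
      Top ⟨i, by omega⟩ ⟨i + 1, hi⟩ (Top ⟨j, by omega⟩ ⟨j + 1, hj⟩ f) =
        Top ⟨j, by omega⟩ ⟨j + 1, hj⟩ (Top ⟨i, by omega⟩ ⟨i + 1, hi⟩ f)) := by
  constructor
  · intro i hi f
    set u : Fin n := ⟨i, by omega⟩
    set v : Fin n := ⟨i + 1, by omega⟩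
    set w : Fin n := ⟨i + 2, hi⟩
    have huv : u ≠ v := by simp [u, v, Fin.ext_iff]
    have hvw : v ≠ w := by simp [v, w, Fin.ext_iff]
    have huw : u ≠ w := by simp [u, w, Fin.ext_iff]
    have key : Equiv.swap u v * Equiv.swap v w * Equiv.swap u v
        = Equiv.swap v w * Equiv.swap u v * Equiv.swap v w := by
      have k2 : Equiv.swap v w * Equiv.swap u v * Equiv.swap v w = Equiv.swap w u :=
        Equiv.swap_mul_swap_mul_swap huv huw
      have k1 : Equiv.swap v u * Equiv.swap w v * Equiv.swap v u = Equiv.swap u w :=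
        Equiv.swap_mul_swap_mul_swap hvw.symm huw.symm
      rw [k2, Equiv.swap_comm u v, Equiv.swap_comm v w, k1, Equiv.swap_comm w u]
    simp only [Top_eq]
    exact hecke_braid (permHom (Equiv.swap u v)) (permHom (Equiv.swap v w)) (t2 n)
      (x2 u) (x2 v) (x2 w)
      (permHom_t _) (permHom_t _)
      (by rw [permHom_x, Equiv.swap_apply_left])
      (by rw [permHom_x, Equiv.swap_apply_right])
      (by rw [permHom_x, Equiv.swap_apply_of_ne_of_ne huw.symm hvw.symm])
      (by rw [permHom_x, Equiv.swap_apply_of_ne_of_ne huv huw])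
      (by rw [permHom_x, Equiv.swap_apply_left])
      (by rw [permHom_x, Equiv.swap_apply_right])
      (x2_ne huv) (x2_ne hvw) (x2_ne huw)
      (fun g => by rw [permHom_comp, Equiv.swap_mul_self, permHom_one])
      (fun g => by rw [permHom_comp, Equiv.swap_mul_self, permHom_one])
      (fun g => by rw [permHom_comp, permHom_comp, permHom_comp, permHom_comp, key])
      f
  · intro i j hi hj hij f
    set u : Fin n := ⟨i, by omega⟩
    set v : Fin n := ⟨i + 1, hi⟩
    set p : Fin n := ⟨j, by omega⟩
    set q : Fin n := ⟨j + 1, hj⟩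
    have hup : u ≠ p := by simp [u, p, Fin.ext_iff]; omega
    have huq : u ≠ q := by simp [u, q, Fin.ext_iff]; omega
    have hvp : v ≠ p := by simp [v, p, Fin.ext_iff]; omega
    have hvq : v ≠ q := by simp [v, q, Fin.ext_iff]; omega
    have huv : u ≠ v := by simp [u, v, Fin.ext_iff]
    have hpq : p ≠ q := by simp [p, q, Fin.ext_iff]
    have hdis : (Equiv.swap u v).Disjoint (Equiv.swap p q) := by
      intro z
      by_cases hzu : z = u
      · subst hzu; right; exact Equiv.swap_apply_of_ne_of_ne hup huq
      by_cases hzv : z = v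
      · subst hzv; right; exact Equiv.swap_apply_of_ne_of_ne hvp hvq
      · left; exact Equiv.swap_apply_of_ne_of_ne hzu hzv
    have hcm : Equiv.swap u v * Equiv.swap p q = Equiv.swap p q * Equiv.swap u v :=
      hdis.commute.eq
    simp only [Top_eq]
    exact hecke_comm (permHom (Equiv.swap u v)) (permHom (Equiv.swap p q)) (t2 n)
      (x2 u) (x2 v) (x2 p) (x2 q)
      (permHom_t _) (permHom_t _)
      (by rw [permHom_x, Equiv.swap_apply_left])
      (by rw [permHom_x, Equiv.swap_apply_right])
      (by rw [permHom_x, Equiv.swap_apply_of_ne_of_ne hup.symm hvp.symm])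
      (by rw [permHom_x, Equiv.swap_apply_of_ne_of_ne huq.symm hvq.symm])
      (by rw [permHom_x, Equiv.swap_apply_of_ne_of_ne hup huq])
      (by rw [permHom_x, Equiv.swap_apply_of_ne_of_ne hvp hvq])
      (by rw [permHom_x, Equiv.swap_apply_left])
      (by rw [permHom_x, Equiv.swap_apply_right])
      (sub_ne_zero.mpr (x2_ne huv)) (sub_ne_zero.mpr (x2_ne hpq))
      (fun g => by rw [permHom_comp, permHom_comp, hcm])
      f

end Gaudin
end
end

section
/- (Vanishing characterization of factorial Schur functions.) Let a₁, a₂, … be indeterminates. For a partition λ = (λ₁ ≥ ⋯ ≥ λₙ ≥ 0), define the factorial Schur polynomial s_λ(x | a) = det( ∏_{l=1}^{λ_j + n − j}(x_i − a_l) )_{i,j=1,…,n} / Δ(x), where Δ(x) = ∏_{1≤i<j≤n}(x_i − x_j). For a partition μ with at most n parts, set x^{(μ)} = (a_{μ₁+n}, a_{μ₂+n−1}, …, a_{μₙ+1}). Then s_λ(x^{(μ)} | a) ≠ 0 if and only if the diagram of μ contains the diagram of λ (i.e. μ_i ≥ λ_i for all i); in particular s_λ(x^{(μ)} | a) = 0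 for every partition μ ≠ λ with |μ| ≤ |λ|, while s_λ(x^{(λ)} | a) ≠ 0. -/
noncomputable section

open scoped BigOperators

namespace Gaudin

/-- The field `ℚ(a₁, a₂, …)` generated by countably many indeterminates
(`a 0` is unused; the relevant variables are `a_l` for `l ≥ 1`). -/
abbrev K19 := FractionRing (MvPolynomial ℕ ℚ)

/-- The indeterminates `a_l`. -/
def av (l : ℕ) : K19 :=
  algebraMap (MvPolynomial ℕ ℚ) K19 (MvPolynomial.X l)

/-- The factorial Schur polynomial
`s_λ(x | a) = det( ∏_{l=1}^{λ_j + n - j} (x_i - a_l) ) / Δ(x)`,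
with `Δ(x) = ∏_{i<j}(x_i - x_j)` (rows `i`, columns `j`, both `1`-indexed). -/
def facSchur (n : ℕ) (lam : Fin n → ℕ) (x : Fin n → K19) : K19 :=
  Matrix.det (Matrix.of fun i j : Fin n =>
      ∏ l ∈ Finset.Icc 1 (lam j + (n - 1 - (j : ℕ))), (x i - av l)) /
    ∏ i : Fin n, ∏ j ∈ Finset.Ioi i, (x i - x j)

/-- The specialization point `x^{(μ)} = (a_{μ₁+n}, a_{μ₂+n-1}, …, a_{μₙ+1})`. -/
def xspec (n : ℕ) (mu : Fin n → ℕ) : Fin n → K19 :=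
  fun i => av (mu i + n - (i : ℕ))




lemma exists_inversion {n : ℕ} (σ : Equiv.Perm (Fin n)) (h : σ ≠ 1) :
    ∃ i j : Fin n, j < i ∧ σ i < σ j := by
  by_contra hc
  push_neg at hc
  have hsm : StrictMono (σ : Fin n → Fin n) := by
    intro a b hab
    rcases lt_or_eq_of_le (hc b a hab) with h' | h'
    · exact h'
    · exact absurd (σ.injective h') hab.ne
  have inst : WellFoundedLT (Fin n) := inferInstance
  have hr : Set.range (σ : Fin n → Fin n) = Set.range (id : Fin n → Fin n) := by
    simp [σ.surjective.range_eq]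
  have : (σ : Fin n → Fin n) = id :=
    (@StrictMono.range_inj (Fin n) (Fin n) _ _ inst _ _ hsm strictMono_id).1 hr
  exact h (Equiv.ext fun x => congrFun this x)

lemma rearrange_lt {n : ℕ} (m p : Fin n → ℕ) (hm : StrictAnti m) (hp : StrictAnti p)
    (σ : Equiv.Perm (Fin n)) (hσ : σ ≠ 1) :
    ∑ i, m (σ i) * p i < ∑ i, m i * p i := by
  have key : ∑ i, ((m (σ i) : ℚ)) • ((p i : ℚ)) < ∑ i, ((m i : ℚ)) • ((p i : ℚ)) := by
    have hfg : Monovary (fun i => (m i : ℚ)) (fun i => (p i : ℚ)) := by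
      intro i j hij
      simp only at hij ⊢
      have hpij : p i < p j := by exact_mod_cast hij
      have hji : j < i := hp.lt_iff_gt.mp hpij
      exact_mod_cast (hm hji).le
    refine (Monovary.sum_comp_perm_smul_lt_sum_smul_iff hfg).2 ?_
    intro hmono
    obtain ⟨i, j, hji, hσij⟩ := exists_inversion σ hσ
    have hg : ((p i : ℚ)) < ((p j : ℚ)) := by exact_mod_cast hp hji
    have h2 := hmono hg
    simp only [Function.comp] at h2
    have hlt : m (σ j) < m (σ i) := hm hσij
    have h3 : m (σ i) ≤ m (σ j) := by exact_mod_cast h2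
    omega
  simp only [smul_eq_mul] at key
  exact_mod_cast key

lemma det_pos {n : ℕ} (m p : Fin n → ℕ) (hm : StrictAnti m) (hp : StrictAnti p)
    (h1 : ∀ i, 1 ≤ m i) (hmp : ∀ i, p i < m i) (C : ℕ)
    (hC2 : 2 ≤ C) (hCP : 2 * (∑ i, p i) ≤ C) (hCF : 2 * Nat.factorial n < C) :
    (0:ℚ) < Matrix.det (Matrix.of fun i j : Fin n =>
      ∏ l ∈ Finset.Icc 1 (p j), ((C:ℚ)^(m i) - (C:ℚ)^l)) := by
  set Cq : ℚ := (C:ℚ) with hCqdef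
  have hC1 : (1:ℚ) < Cq := by rw [hCqdef]; exact_mod_cast (by omega : 1 < C)
  have hC0 : (0:ℚ) < Cq := by linarith
  have hC1' : (1:ℚ) ≤ Cq := hC1.le
  set E : Fin n → Fin n → ℚ := fun i j => ∏ l ∈ Finset.Icc 1 (p j), (Cq^(m i) - Cq^l) with hEdef
  set S : ℕ := ∑ i, m i * p i with hSdef
  set P : ℕ := ∑ i, p i with hPdef
  have hfac_pos : ∀ i j, p j < m i → ∀ l ∈ Finset.Icc 1 (p j), 0 < Cq^(m i) - Cq^l := by
    intro i j hij l hl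
    rw [Finset.mem_Icc] at hl
    have : Cq^l < Cq^(m i) := pow_lt_pow_right₀ hC1 (by omega)
    linarith
  have hfac_le : ∀ (i : Fin n) (l : ℕ), Cq^(m i) - Cq^l ≤ Cq^(m i) := by
    intro i l
    have : (0:ℚ) < Cq^l := pow_pos hC0 l
    linarith
  have hE0 : ∀ i j, 0 ≤ E i j := by
    intro i j
    rcases le_or_gt (m i) (p j) with h | h
    · have hmem : m i ∈ Finset.Icc 1 (p j) := Finset.mem_Icc.2 ⟨h1 i, h⟩
      have : E i j = 0 := Finset.prod_eq_zero hmem (by ring)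
      rw [this]
    · exact Finset.prod_nonneg fun l hl => (hfac_pos i j h l hl).le
  have hEle : ∀ i j, E i j ≤ Cq^(m i * p j) := by
    intro i j
    rcases le_or_gt (m i) (p j) with h | h
    · have hmem : m i ∈ Finset.Icc 1 (p j) := Finset.mem_Icc.2 ⟨h1 i, h⟩
      have hz : E i j = 0 := Finset.prod_eq_zero hmem (by ring)
      rw [hz]
      positivity
    · calc E i j ≤ ∏ _l ∈ Finset.Icc 1 (p j), Cq^(m i) :=
            Finset.prod_le_prod (fun l hl => (hfac_pos i j h l hl).le)
              (fun l _hl => hfac_le i l)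
        _ = (Cq^(m i))^((Finset.Icc 1 (p j)).card) := Finset.prod_const _
        _ = Cq^(m i * p j) := by rw [Nat.card_Icc, Nat.add_sub_cancel, ← pow_mul]
  have h1C : (0:ℚ) ≤ 1 - 1/Cq := by
    have : 1/Cq ≤ 1 := by rw [div_le_one hC0]; linarith
    linarith
  have hdiag : ∀ i, Cq^(m i * p i) * (1 - 1/Cq)^(p i) ≤ E i i := by
    intro i
    have h2 : Cq^(m i - 1) = Cq^(m i) / Cq := by
      rw [eq_div_iff (ne_of_gt hC0), ← pow_succ]
      congr 1
      have := h1 i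
      omega
    have hfl : ∀ l ∈ Finset.Icc 1 (p i), Cq^(m i) * (1 - 1/Cq) ≤ Cq^(m i) - Cq^l := by
      intro l hl
      rw [Finset.mem_Icc] at hl
      have h1l : Cq^l ≤ Cq^(m i - 1) := by
        apply pow_le_pow_right₀ hC1'
        have := hmp i
        omega
      have key : Cq^(m i) * (1 - 1/Cq) = Cq^(m i) - Cq^(m i - 1) := by
        rw [h2]; ring
      rw [key]
      linarith
    have hnn : (0:ℚ) ≤ Cq^(m i) * (1 - 1/Cq) :=
      mul_nonneg (pow_nonneg hC0.le _) h1C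
    calc Cq^(m i * p i) * (1 - 1/Cq)^(p i)
        = (Cq^(m i) * (1 - 1/Cq))^(p i) := by rw [mul_pow, ← pow_mul]
      _ = ∏ _l ∈ Finset.Icc 1 (p i), (Cq^(m i) * (1 - 1/Cq)) := by
          rw [Finset.prod_const, Nat.card_Icc, Nat.add_sub_cancel]
      _ ≤ E i i := Finset.prod_le_prod (fun l _ => hnn) hfl
  have hbern : (1:ℚ)/2 ≤ (1 - 1/Cq)^P := by
    have ha : (-2:ℚ) ≤ -(1/Cq) := by
      have : 1/Cq ≤ 1 := by rw [div_le_one hC0]; linarith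
      have : (0:ℚ) < 1/Cq := by positivity
      linarith
    have hB := one_add_mul_le_pow ha P
    rw [show (1 + -(1/Cq) : ℚ) = 1 - 1/Cq by ring] at hB
    rw [show (1 + (P:ℚ) * -(1/Cq) : ℚ) = 1 - (P:ℚ)/Cq by ring] at hB
    have hPC : (P:ℚ)/Cq ≤ 1/2 := by
      rw [div_le_div_iff₀ hC0 (by norm_num : (0:ℚ) < 2)]
      have h' : (2 * P : ℕ) ≤ C := hCP
      have h'' : ((2 * P : ℕ) : ℚ) ≤ (C : ℚ) := by exact_mod_cast h'
      push_cast at h''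
      rw [hCqdef]
      linarith
    linarith
  have hTid : Cq^S / 2 ≤ ∏ i, E i i := by
    have hstep : ∏ i, (Cq^(m i * p i) * (1 - 1/Cq)^(p i)) ≤ ∏ i, E i i :=
      Finset.prod_le_prod
        (fun i _ => mul_nonneg (pow_nonneg hC0.le _) (pow_nonneg h1C _))
        (fun i _ => hdiag i)
    have heq : ∏ i, (Cq^(m i * p i) * (1 - 1/Cq)^(p i)) = Cq^S * (1 - 1/Cq)^P := by
      rw [Finset.prod_mul_distrib, Finset.prod_pow_eq_pow_sum, Finset.prod_pow_eq_pow_sum]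
    have hCS : (0:ℚ) ≤ Cq^S := pow_nonneg hC0.le _
    have := mul_le_mul_of_nonneg_left hbern hCS
    calc Cq^S / 2 = Cq^S * (1/2) := by ring
      _ ≤ Cq^S * (1 - 1/Cq)^P := this
      _ = ∏ i, (Cq^(m i * p i) * (1 - 1/Cq)^(p i)) := heq.symm
      _ ≤ ∏ i, E i i := hstep
  have hoff : ∀ σ : Equiv.Perm (Fin n), σ ≠ 1 → ∏ i, E (σ i) i ≤ Cq^(S-1) := by
    intro σ hσ
    have hA : ∏ i, E (σ i) i ≤ ∏ i, Cq^(m (σ i) * p i) :=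
      Finset.prod_le_prod (fun i _ => hE0 _ _) (fun i _ => hEle _ _)
    have hB : ∏ i, Cq^(m (σ i) * p i) = Cq^(∑ i, m (σ i) * p i) :=
      Finset.prod_pow_eq_pow_sum _ _ _
    have hC' := rearrange_lt m p hm hp σ hσ
    have hD : Cq^(∑ i, m (σ i) * p i) ≤ Cq^(S-1) := by
      apply pow_le_pow_right₀ hC1'
      omega
    calc ∏ i, E (σ i) i ≤ ∏ i, Cq^(m (σ i) * p i) := hA
      _ = Cq^(∑ i, m (σ i) * p i) := hB
      _ ≤ Cq^(S-1) := hD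
  -- the determinant
  rw [Matrix.det_apply]
  have hof : ∀ (σ : Equiv.Perm (Fin n)), (∏ i, (Matrix.of E) (σ i) i) = ∏ i, E (σ i) i := by
    intro σ; rfl
  rw [← Finset.sum_erase_add Finset.univ _ (Finset.mem_univ (1 : Equiv.Perm (Fin n)))]
  have hterm1 : Equiv.Perm.sign (1 : Equiv.Perm (Fin n)) •
      (∏ i, (Matrix.of E) ((1 : Equiv.Perm (Fin n)) i) i) = ∏ i, E i i := by
    simp [Matrix.of_apply]
  have hsmul : ∀ (u : ℤˣ) (x : ℚ), u • x = ((u:ℤ):ℚ) * x := fun u x => by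
    rw [Units.smul_def, zsmul_eq_mul]
  have hpowpos : (0:ℚ) < Cq^(S-1) := pow_pos hC0 _
  have hrest : ∀ σ ∈ Finset.univ.erase (1 : Equiv.Perm (Fin n)),
      -(Cq^(S-1)) ≤ Equiv.Perm.sign σ • ∏ i, (Matrix.of E) (σ i) i := by
    intro σ hσ
    have hσ1 : σ ≠ 1 := (Finset.mem_erase.1 hσ).1
    have hT0 : 0 ≤ ∏ i, E (σ i) i := Finset.prod_nonneg fun i _ => hE0 _ _
    have hTle := hoff σ hσ1
    rw [hof σ, hsmul]
    rcases Int.units_eq_one_or (Equiv.Perm.sign σ) with h | h <;> rw [h] <;> push_cast <;> linarith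
  have hsumlow := Finset.sum_le_sum hrest
  rw [Finset.sum_const] at hsumlow
  have hcard : (Finset.univ.erase (1 : Equiv.Perm (Fin n))).card = Nat.factorial n - 1 := by
    rw [Finset.card_erase_of_mem (Finset.mem_univ 1), Finset.card_univ, Fintype.card_perm,
      Fintype.card_fin]
  rw [hcard] at hsumlow
  have hsumlow' : -(((Nat.factorial n - 1 : ℕ) : ℚ) * Cq^(S-1)) ≤
      ∑ σ ∈ Finset.univ.erase (1 : Equiv.Perm (Fin n)),
        Equiv.Perm.sign σ • ∏ i, (Matrix.of E) (σ i) i := by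
    have heq : (Nat.factorial n - 1) • (-(Cq^(S-1))) = -(((Nat.factorial n - 1 : ℕ) : ℚ) * Cq^(S-1)) := by
      rw [nsmul_eq_mul, mul_neg]
    rw [heq] at hsumlow
    exact hsumlow
  have hfin : ((Nat.factorial n - 1 : ℕ) : ℚ) * Cq^(S-1) < Cq^S / 2 := by
    rcases le_or_gt n 1 with hn1 | hn1
    · have hz : Nat.factorial n - 1 = 0 := by
        have h' : Nat.factorial n ≤ Nat.factorial 1 := Nat.factorial_le hn1
        simp [Nat.factorial] at h'
        omega
      rw [hz]
      simp only [Nat.cast_zero, zero_mul]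
      positivity
    · have i0 : Fin n := ⟨0, by omega⟩
      have i1 : Fin n := ⟨1, by omega⟩
      have hp01 : p (⟨1, by omega⟩ : Fin n) < p (⟨0, by omega⟩ : Fin n) := by
        apply hp
        simp [Fin.lt_def]
      have hp0 : 1 ≤ p (⟨0, by omega⟩ : Fin n) := by omega
      have hS1 : 1 ≤ S := by
        have hle : m (⟨0, by omega⟩ : Fin n) * p (⟨0, by omega⟩ : Fin n) ≤ S :=
          Finset.single_le_sum (f := fun i => m i * p i) (fun i _ => Nat.zero_le _)
            (Finset.mem_univ _)
        have := h1 (⟨0, by omega⟩ : Fin n)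
        nlinarith
      have hf1 : 1 ≤ Nat.factorial n := Nat.factorial_pos n
      have hcast : ((Nat.factorial n - 1 : ℕ) : ℚ) = (Nat.factorial n : ℚ) - 1 := by
        rw [Nat.cast_sub hf1, Nat.cast_one]
      have hq : (Nat.factorial n : ℚ) * 2 < Cq := by
        rw [hCqdef]; exact_mod_cast (by omega : Nat.factorial n * 2 < C)
      rw [hcast]
      calc ((Nat.factorial n:ℚ) - 1) * Cq^(S-1) < (Cq/2) * Cq^(S-1) := by
            apply mul_lt_mul_of_pos_right _ hpowpos
            linarith
        _ = Cq^S / 2 := by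
            have hss : Cq^S = Cq^(S-1) * Cq := by
              rw [← pow_succ]
              congr 1
              omega
            rw [hss]
            ring
  have hterm1' : Cq^S/2 ≤ Equiv.Perm.sign (1 : Equiv.Perm (Fin n)) •
      (∏ i, (Matrix.of E) ((1 : Equiv.Perm (Fin n)) i) i) := by
    rw [hterm1]; exact hTid
  linarith [hsumlow', hterm1', hfin]


lemma det_block_zero {n : ℕ} (M : Matrix (Fin n) (Fin n) K19) (i0 : Fin n)
    (h : ∀ i j, i0 ≤ i → j ≤ i0 → M i j = 0) : M.det = 0 := by
  rw [Matrix.det_apply]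
  refine Finset.sum_eq_zero fun σ _ => ?_
  have hex : ∃ j : Fin n, j ≤ i0 ∧ i0 ≤ σ j := by
    by_contra hc
    push_neg at hc
    have hsub : ∀ j ∈ Finset.Iic i0, σ j ∈ Finset.Iio i0 := by
      intro j hj
      simp only [Finset.mem_Iic] at hj
      simpa [Finset.mem_Iio] using hc j hj
    have hinj : Set.InjOn σ (Finset.Iic i0) := fun a _ b _ hab => σ.injective hab
    have hcard := Finset.card_le_card_of_injOn σ hsub hinj
    rw [Fin.card_Iic, Fin.card_Iio] at hcard
    omega
  obtain ⟨j, hj, hij⟩ := hex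
  have hz : (∏ i, M (σ i) i) = 0 :=
    Finset.prod_eq_zero (Finset.mem_univ j) (h (σ j) j hij hj)
  simp [hz]

/-- The key vanishing characterization. -/
lemma facSchur_ne_zero_iff (n : ℕ) (lam mu : Fin n → ℕ)
    (hlam : Antitone lam) (hmu : Antitone mu) :
    facSchur n lam (xspec n mu) ≠ 0 ↔ ∀ i, lam i ≤ mu i := by
  have hmanti : StrictAnti (fun i : Fin n => mu i + n - (i:ℕ)) := by
    intro i j hij
    have h1 := hmu hij.le
    have h2 : (i:ℕ) < (j:ℕ) := hij
    have h3 := j.isLt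
    simp only
    omega
  have hpanti : StrictAnti (fun j : Fin n => lam j + (n - 1 - (j:ℕ))) := by
    intro i j hij
    have h1 := hlam hij.le
    have h2 : (i:ℕ) < (j:ℕ) := hij
    have h3 := j.isLt
    simp only
    omega
  have havinj : ∀ {r s : ℕ}, r ≠ s → av r - av s ≠ 0 := by
    intro r s hrs
    rw [sub_ne_zero]
    intro he
    exact hrs (MvPolynomial.X_injective (IsFractionRing.injective (MvPolynomial ℕ ℚ) K19 he))
  have hden : (∏ i : Fin n, ∏ j ∈ Finset.Ioi i, (xspec n mu i - xspec n mu j)) ≠ 0 := by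
    rw [Finset.prod_ne_zero_iff]
    intro i _
    rw [Finset.prod_ne_zero_iff]
    intro j hj
    have hij : i < j := Finset.mem_Ioi.mp hj
    show av (mu i + n - (i:ℕ)) - av (mu j + n - (j:ℕ)) ≠ 0
    exact havinj (hmanti hij).ne'
  constructor
  · intro hne
    by_contra hc
    push_neg at hc
    obtain ⟨i0, hi0⟩ := hc
    apply hne
    have hdet0 : Matrix.det (Matrix.of fun i j : Fin n =>
        ∏ l ∈ Finset.Icc 1 (lam j + (n - 1 - (j:ℕ))), (xspec n mu i - av l)) = 0 := by
      apply det_block_zero _ i0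
      intro i j hi hj
      rw [Matrix.of_apply]
      apply Finset.prod_eq_zero (i := mu i + n - (i:ℕ))
      · rw [Finset.mem_Icc]
        have h1 : mu i ≤ mu i0 := hmu hi
        have h2 : lam i0 ≤ lam j := hlam hj
        have h3 : (i0:ℕ) ≤ (i:ℕ) := hi
        have h4 : (j:ℕ) ≤ (i0:ℕ) := hj
        have h5 := i.isLt
        have h6 := i0.isLt
        omega
      · show xspec n mu i - av (mu i + n - (i:ℕ)) = 0
        rw [show xspec n mu i = av (mu i + n - (i:ℕ)) from rfl, sub_self]
    show facSchur n lam (xspec n mu) = 0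
    unfold facSchur
    rw [hdet0, zero_div]
  · intro hle
    unfold facSchur
    apply div_ne_zero _ hden
    set Pm : Matrix (Fin n) (Fin n) (MvPolynomial ℕ ℚ) := Matrix.of fun i j =>
      ∏ l ∈ Finset.Icc 1 (lam j + (n - 1 - (j:ℕ))),
        (MvPolynomial.X (mu i + n - (i:ℕ)) - MvPolynomial.X l) with hPm
    have hmapdet : Matrix.det (Matrix.of fun i j : Fin n =>
        ∏ l ∈ Finset.Icc 1 (lam j + (n - 1 - (j:ℕ))), (xspec n mu i - av l))
        = algebraMap (MvPolynomial ℕ ℚ) K19 Pm.det := by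
      rw [RingHom.map_det]
      congr 1
      ext i j
      simp only [RingHom.mapMatrix_apply, Matrix.map_apply, Matrix.of_apply, hPm]
      rw [map_prod]
      apply Finset.prod_congr rfl
      intro l _
      rw [map_sub]
      rfl
    rw [hmapdet]
    set C : ℕ := 2 * (∑ j : Fin n, (lam j + (n - 1 - (j:ℕ)))) + 2 * Nat.factorial n + 2
      with hCdef
    have hpos := det_pos (fun i : Fin n => mu i + n - (i:ℕ))
        (fun j : Fin n => lam j + (n - 1 - (j:ℕ)))
        hmanti hpanti
        (fun i => by have := i.isLt; omega)
        (fun i => by have h5 := i.isLt; have h6 := hle i; omega) C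
        (by omega)
        (by show 2 * (∑ j : Fin n, (lam j + (n - 1 - (j:ℕ)))) ≤ C; omega)
        (by omega)
    intro h0
    have hPd0 : Pm.det = 0 :=
      (map_eq_zero_iff _ (IsFractionRing.injective (MvPolynomial ℕ ℚ) K19)).mp h0
    have heval : MvPolynomial.eval (fun l => (C:ℚ)^l) Pm.det =
        Matrix.det (Matrix.of fun i j : Fin n =>
          ∏ l ∈ Finset.Icc 1 ((fun j : Fin n => lam j + (n - 1 - (j:ℕ))) j),
            ((C:ℚ)^((fun i : Fin n => mu i + n - (i:ℕ)) i) - (C:ℚ)^l)) := by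
      rw [RingHom.map_det]
      congr 1
      ext i j
      simp only [RingHom.mapMatrix_apply, Matrix.map_apply, Matrix.of_apply, hPm]
      rw [map_prod]
      apply Finset.prod_congr rfl
      intro l _
      rw [map_sub, MvPolynomial.eval_X, MvPolynomial.eval_X]
    rw [hPd0, map_zero] at heval
    rw [← heval] at hpos
    exact lt_irrefl 0 hpos

/-- vanishing characterization of factorial Schur functions:
`s_λ(x^{(μ)} | a) ≠ 0` iff the diagram of `μ` contains the diagram of `λ`;
in particular `s_λ(x^{(μ)} | a) = 0` for every partition `μ ≠ λ` with
`|μ| ≤ |λ|`, while `s_λ(x^{(λ)} | a) ≠ 0`. -/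
theorem facSchur_vanishing (n : ℕ) (hn : 0 < n) (lam mu : Fin n → ℕ)
    (hlam : Antitone lam) (hmu : Antitone mu) :
    (facSchur n lam (xspec n mu) ≠ 0 ↔ ∀ i, lam i ≤ mu i) ∧
    ((mu ≠ lam ∧ ∑ i : Fin n, mu i ≤ ∑ i : Fin n, lam i) →
      facSchur n lam (xspec n mu) = 0) ∧
    facSchur n lam (xspec n lam) ≠ 0 := by
  refine ⟨facSchur_ne_zero_iff n lam mu hlam hmu, ?_, ?_⟩
  · rintro ⟨hne, hsum⟩
    by_contra h0
    have hle := (facSchur_ne_zero_iff n lam mu hlam hmu).1 h0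
    have hsum2 : ∑ i : Fin n, lam i ≤ ∑ i : Fin n, mu i :=
      Finset.sum_le_sum (fun i _ => hle i)
    have hsumeq : ∑ i : Fin n, lam i = ∑ i : Fin n, mu i := le_antisymm hsum2 hsum
    have hall : ∀ i ∈ Finset.univ, lam i = mu i :=
      (Finset.sum_eq_sum_iff_of_le (fun i _ => hle i)).mp hsumeq
    exact hne (funext fun i => (hall i (Finset.mem_univ i)).symm)
  · exact (facSchur_ne_zero_iff n lam lam hlam hlam).2 (fun i => le_refl _)

end Gaudin
end
end
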